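/- For two symmetry parameters s₁, s₂ with associated functions f₁ = f_{s₁}, f₂ = f_{s₂} ∈ R[u], define f̂ = 𝒴₁ðf₂ + 𝒴̄₁ð̄f₂ + f₁∂_u f₂ − 𝒴₂ðf₁ − 𝒴̄₂ð̄f₁ − f₂∂_u f₁. Then f̂ = f_{[s₁,s₂]}, i.e. f̂ = T̂ + (u/2)(ð𝒴̂ + ð̄𝒴̄̂) where (𝒴̂,𝒴̄̂,T̂) = [s₁,s₂]. (This expresses the closure, under the modified Lie bracket, of the u-components ξ^u = f of the asymptotic Killing vectors of Theorem 1.) -/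

import Mathlib

/-!
Common setup: we work over `ℂ` with flat conformal factor `φ̃ = 0`, so `P = √2` and the
eth operators reduce to `ð = √2 ∂_ζ̄` and `ð̄ = √2 ∂_ζ` on the ring `R[u]` of polynomials
in `u` with coefficients in `R = ℂ[ζ,ζ⁻¹,ζ̄,ζ̄⁻¹]`, which also carries `∂_u`.

`R[u]` is modelled as `RU := AddMonoidAlgebra ℂ (ℤ × ℤ × ℕ)`, the monomial
`single (m,n,k) 1` representing `ζ^m ζ̄^n u^k`; `R` is `AddMonoidAlgebra ℂ (ℤ × ℤ)`, and
`ℂ[ζ,ζ⁻¹]`, `ℂ[ζ̄,ζ̄⁻¹]` are copies of `AddMonoidAlgebra ℂ ℤ`, all included into `RU`.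
-/

/-- `R[u]`, with `single (m,n,k) 1 = ζ^m ζ̄^n u^k`. -/
abbrev RU : Type := AddMonoidAlgebra ℂ (ℤ × ℤ × ℕ)

/-- `R = ℂ[ζ,ζ⁻¹,ζ̄,ζ̄⁻¹]`. -/
abbrev LR : Type := AddMonoidAlgebra ℂ (ℤ × ℤ)

/-- A copy of `ℂ[ζ,ζ⁻¹]` (resp. `ℂ[ζ̄,ζ̄⁻¹]`). -/
abbrev W : Type := AddMonoidAlgebra ℂ ℤ

/-- `ð = √2 ∂_ζ̄` on `R[u]`. -/
noncomputable def eth : RU →ₗ[ℂ] RU :=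
  (AddMonoidAlgebra.coeffLinearEquiv ℂ).symm.toLinearMap ∘ₗ
    (Finsupp.lsum ℂ fun p : ℤ × ℤ × ℕ =>
    ((Real.sqrt 2 : ℂ) * p.2.1) • Finsupp.lsingle (p.1, p.2.1 - 1, p.2.2) :
      (ℤ × ℤ × ℕ →₀ ℂ) →ₗ[ℂ] (ℤ × ℤ × ℕ →₀ ℂ)) ∘ₗ (AddMonoidAlgebra.coeffLinearEquiv ℂ).toLinearMap

/-- `ð̄ = √2 ∂_ζ` on `R[u]`. -/
noncomputable def ethBar : RU →ₗ[ℂ] RU :=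
  (AddMonoidAlgebra.coeffLinearEquiv ℂ).symm.toLinearMap ∘ₗ
    (Finsupp.lsum ℂ fun p : ℤ × ℤ × ℕ =>
    ((Real.sqrt 2 : ℂ) * p.1) • Finsupp.lsingle (p.1 - 1, p.2.1, p.2.2) :
      (ℤ × ℤ × ℕ →₀ ℂ) →ₗ[ℂ] (ℤ × ℤ × ℕ →₀ ℂ)) ∘ₗ (AddMonoidAlgebra.coeffLinearEquiv ℂ).toLinearMap

/-- `∂_u` on `R[u]`. -/
noncomputable def du : RU →ₗ[ℂ] RU :=
  (AddMonoidAlgebra.coeffLinearEquiv ℂ).symm.toLinearMap ∘ₗ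
    (Finsupp.lsum ℂ fun p : ℤ × ℤ × ℕ =>
    (p.2.2 : ℂ) • Finsupp.lsingle (p.1, p.2.1, p.2.2 - 1) :
      (ℤ × ℤ × ℕ →₀ ℂ) →ₗ[ℂ] (ℤ × ℤ × ℕ →₀ ℂ)) ∘ₗ (AddMonoidAlgebra.coeffLinearEquiv ℂ).toLinearMap

/-- The element `u ∈ R[u]`. -/
noncomputable def uVar : RU := AddMonoidAlgebra.single ((0 : ℤ), (0 : ℤ), (1 : ℕ)) (1 : ℂ)

/-- The inclusion `ℂ[ζ̄,ζ̄⁻¹] ↪ R[u]`, `ζ̄^n ↦ ζ̄^n`. -/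
noncomputable def incY : W →ₗ[ℂ] RU :=
  (AddMonoidAlgebra.coeffLinearEquiv ℂ).symm.toLinearMap ∘ₗ
    (Finsupp.lsum ℂ fun n : ℤ => Finsupp.lsingle (0, n, 0) :
      (ℤ →₀ ℂ) →ₗ[ℂ] (ℤ × ℤ × ℕ →₀ ℂ)) ∘ₗ (AddMonoidAlgebra.coeffLinearEquiv ℂ).toLinearMap

/-- The inclusion `ℂ[ζ,ζ⁻¹] ↪ R[u]`, `ζ^m ↦ ζ^m`. -/
noncomputable def incYb : W →ₗ[ℂ] RU :=
  (AddMonoidAlgebra.coeffLinearEquiv ℂ).symm.toLinearMap ∘ₗ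
    (Finsupp.lsum ℂ fun m : ℤ => Finsupp.lsingle (m, 0, 0) :
      (ℤ →₀ ℂ) →ₗ[ℂ] (ℤ × ℤ × ℕ →₀ ℂ)) ∘ₗ (AddMonoidAlgebra.coeffLinearEquiv ℂ).toLinearMap

/-- The inclusion `R ↪ R[u]`. -/
noncomputable def incT : LR →ₗ[ℂ] RU :=
  (AddMonoidAlgebra.coeffLinearEquiv ℂ).symm.toLinearMap ∘ₗ
    (Finsupp.lsum ℂ fun q : ℤ × ℤ => Finsupp.lsingle (q.1, q.2, 0) :
      (ℤ × ℤ →₀ ℂ) →ₗ[ℂ] (ℤ × ℤ × ℕ →₀ ℂ)) ∘ₗ (AddMonoidAlgebra.coeffLinearEquiv ℂ).toLinearMap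

/-- `ð` on the copy `ℂ[ζ̄,ζ̄⁻¹]` (equivalently `ð̄` on the copy `ℂ[ζ,ζ⁻¹]`):
`√2` times the formal derivative. -/
noncomputable def ethW : W →ₗ[ℂ] W :=
  (AddMonoidAlgebra.coeffLinearEquiv ℂ).symm.toLinearMap ∘ₗ
    (Finsupp.lsum ℂ fun n : ℤ => ((Real.sqrt 2 : ℂ) * n) • Finsupp.lsingle (n - 1) :
      (ℤ →₀ ℂ) →ₗ[ℂ] (ℤ →₀ ℂ)) ∘ₗ (AddMonoidAlgebra.coeffLinearEquiv ℂ).toLinearMap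

/-- `ð = √2 ∂_ζ̄` on `R`. -/
noncomputable def ethR : LR →ₗ[ℂ] LR :=
  (AddMonoidAlgebra.coeffLinearEquiv ℂ).symm.toLinearMap ∘ₗ
    (Finsupp.lsum ℂ fun q : ℤ × ℤ => ((Real.sqrt 2 : ℂ) * q.2) • Finsupp.lsingle (q.1, q.2 - 1) :
      (ℤ × ℤ →₀ ℂ) →ₗ[ℂ] (ℤ × ℤ →₀ ℂ)) ∘ₗ (AddMonoidAlgebra.coeffLinearEquiv ℂ).toLinearMap

/-- `ð̄ = √2 ∂_ζ` on `R`. -/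
noncomputable def ethBarR : LR →ₗ[ℂ] LR :=
  (AddMonoidAlgebra.coeffLinearEquiv ℂ).symm.toLinearMap ∘ₗ
    (Finsupp.lsum ℂ fun q : ℤ × ℤ => ((Real.sqrt 2 : ℂ) * q.1) • Finsupp.lsingle (q.1 - 1, q.2) :
      (ℤ × ℤ →₀ ℂ) →ₗ[ℂ] (ℤ × ℤ →₀ ℂ)) ∘ₗ (AddMonoidAlgebra.coeffLinearEquiv ℂ).toLinearMap

/-- The inclusion `ℂ[ζ̄,ζ̄⁻¹] ↪ R`. -/
noncomputable def jY : W →ₗ[ℂ] LR :=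
  (AddMonoidAlgebra.coeffLinearEquiv ℂ).symm.toLinearMap ∘ₗ
    (Finsupp.lsum ℂ fun n : ℤ => Finsupp.lsingle (0, n) :
      (ℤ →₀ ℂ) →ₗ[ℂ] (ℤ × ℤ →₀ ℂ)) ∘ₗ (AddMonoidAlgebra.coeffLinearEquiv ℂ).toLinearMap

/-- The inclusion `ℂ[ζ,ζ⁻¹] ↪ R`. -/
noncomputable def jYb : W →ₗ[ℂ] LR :=
  (AddMonoidAlgebra.coeffLinearEquiv ℂ).symm.toLinearMap ∘ₗ
    (Finsupp.lsum ℂ fun m : ℤ => Finsupp.lsingle (m, 0) :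
      (ℤ →₀ ℂ) →ₗ[ℂ] (ℤ × ℤ →₀ ℂ)) ∘ₗ (AddMonoidAlgebra.coeffLinearEquiv ℂ).toLinearMap

/-- A symmetry parameter `s = (𝒴, 𝒴̄, T)` with `𝒴 ∈ ℂ[ζ̄,ζ̄⁻¹]`, `𝒴̄ ∈ ℂ[ζ,ζ⁻¹]`
(so that `ð̄𝒴 = 0 = ð𝒴̄`, the conformal Killing equations) and `T ∈ R`. -/
structure SymParam : Type where
  /-- `𝒴`, a function of `ζ̄`. -/
  cY : W
  /-- `𝒴̄`, a function of `ζ`. -/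
  cYb : W
  /-- The supertranslation part `T ∈ R`. -/
  T : LR

/-- `ψ_s = ð𝒴 + ð̄𝒴̄ ∈ R`. -/
noncomputable def psiR (s : SymParam) : LR := jY (ethW s.cY) + jYb (ethW s.cYb)

/-- `f_s = T + (u/2) ψ_s ∈ R[u]`. -/
noncomputable def fOf (s : SymParam) : RU :=
  incT s.T + (1 / 2 : ℂ) • (uVar * incT (psiR s))

/-- The `𝔟𝔪𝔰₄` bracket `[s₁,s₂] = ŝ` on symmetry parameters:
`𝒴̂ = 𝒴₁ð𝒴₂ − 𝒴₂ð𝒴₁`, `𝒴̄̂ = 𝒴̄₁ð̄𝒴̄₂ − 𝒴̄₂ð̄𝒴̄₁`,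
`T̂ = 𝒴₁ðT₂ + 𝒴̄₁ð̄T₂ − 𝒴₂ðT₁ − 𝒴̄₂ð̄T₁ − ½(ψ₁T₂ − ψ₂T₁)`. -/
noncomputable def sBracket (s₁ s₂ : SymParam) : SymParam where
  cY := s₁.cY * ethW s₂.cY - s₂.cY * ethW s₁.cY
  cYb := s₁.cYb * ethW s₂.cYb - s₂.cYb * ethW s₁.cYb
  T := jY s₁.cY * ethR s₂.T + jYb s₁.cYb * ethBarR s₂.T
      - jY s₂.cY * ethR s₁.T - jYb s₂.cYb * ethBarR s₁.T
      - (1 / 2 : ℂ) • (psiR s₁ * s₂.T - psiR s₂ * s₁.T)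

/-! ### Auxiliary lemmas -/


noncomputable abbrev sgRU (a : ℤ × ℤ × ℕ) (x : ℂ) : RU := AddMonoidAlgebra.single a x
noncomputable abbrev sgLR (a : ℤ × ℤ) (x : ℂ) : LR := AddMonoidAlgebra.single a x
noncomputable abbrev sgW (a : ℤ) (x : ℂ) : W := AddMonoidAlgebra.single a x

lemma RU_single_mul (a b : ℤ × ℤ × ℕ) (x y : ℂ) :
    sgRU a x * sgRU b y = sgRU (a + b) (x * y) :=
  AddMonoidAlgebra.single_mul_single (R := ℂ) (M := ℤ × ℤ × ℕ) a b x y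

lemma LR_single_mul (a b : ℤ × ℤ) (x y : ℂ) :
    sgLR a x * sgLR b y = sgLR (a + b) (x * y) :=
  AddMonoidAlgebra.single_mul_single (R := ℂ) (M := ℤ × ℤ) a b x y

lemma W_single_mul (a b : ℤ) (x y : ℂ) :
    sgW a x * sgW b y = sgW (a + b) (x * y) :=
  AddMonoidAlgebra.single_mul_single (R := ℂ) (M := ℤ) a b x y

lemma eth_single (p : ℤ × ℤ × ℕ) (x : ℂ) :
    eth (sgRU p x) = sgRU (p.1, p.2.1 - 1, p.2.2) ((Real.sqrt 2 : ℂ) * p.2.1 * x) := by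
  rw [eth]; simp only [LinearMap.comp_apply, LinearEquiv.coe_coe, AddMonoidAlgebra.coeffLinearEquiv_apply, AddMonoidAlgebra.coeff_single]; erw [Finsupp.lsum_single, LinearMap.smul_apply]
  erw [Finsupp.lsingle_apply]; rw [Finsupp.smul_single, smul_eq_mul]; rfl

lemma ethBar_single (p : ℤ × ℤ × ℕ) (x : ℂ) :
    ethBar (sgRU p x) = sgRU (p.1 - 1, p.2.1, p.2.2) ((Real.sqrt 2 : ℂ) * p.1 * x) := by
  rw [ethBar]; simp only [LinearMap.comp_apply, LinearEquiv.coe_coe, AddMonoidAlgebra.coeffLinearEquiv_apply, AddMonoidAlgebra.coeff_single]; erw [Finsupp.lsum_single, LinearMap.smul_apply]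
  erw [Finsupp.lsingle_apply]; rw [Finsupp.smul_single, smul_eq_mul]; rfl

lemma du_single (p : ℤ × ℤ × ℕ) (x : ℂ) :
    du (sgRU p x) = sgRU (p.1, p.2.1, p.2.2 - 1) ((p.2.2 : ℂ) * x) := by
  rw [du]; simp only [LinearMap.comp_apply, LinearEquiv.coe_coe, AddMonoidAlgebra.coeffLinearEquiv_apply, AddMonoidAlgebra.coeff_single]; erw [Finsupp.lsum_single, LinearMap.smul_apply]
  erw [Finsupp.lsingle_apply]; rw [Finsupp.smul_single, smul_eq_mul]; rfl

lemma ethW_single (n : ℤ) (x : ℂ) :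
    ethW (sgW n x) = sgW (n - 1) ((Real.sqrt 2 : ℂ) * n * x) := by
  rw [ethW]; simp only [LinearMap.comp_apply, LinearEquiv.coe_coe, AddMonoidAlgebra.coeffLinearEquiv_apply, AddMonoidAlgebra.coeff_single]; erw [Finsupp.lsum_single, LinearMap.smul_apply]
  erw [Finsupp.lsingle_apply]; rw [Finsupp.smul_single, smul_eq_mul]; rfl

lemma ethR_single (q : ℤ × ℤ) (x : ℂ) :
    ethR (sgLR q x) = sgLR (q.1, q.2 - 1) ((Real.sqrt 2 : ℂ) * q.2 * x) := by
  rw [ethR]; simp only [LinearMap.comp_apply, LinearEquiv.coe_coe, AddMonoidAlgebra.coeffLinearEquiv_apply, AddMonoidAlgebra.coeff_single]; erw [Finsupp.lsum_single, LinearMap.smul_apply]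
  erw [Finsupp.lsingle_apply]; rw [Finsupp.smul_single, smul_eq_mul]; rfl

lemma ethBarR_single (q : ℤ × ℤ) (x : ℂ) :
    ethBarR (sgLR q x) = sgLR (q.1 - 1, q.2) ((Real.sqrt 2 : ℂ) * q.1 * x) := by
  rw [ethBarR]; simp only [LinearMap.comp_apply, LinearEquiv.coe_coe, AddMonoidAlgebra.coeffLinearEquiv_apply, AddMonoidAlgebra.coeff_single]; erw [Finsupp.lsum_single, LinearMap.smul_apply]
  erw [Finsupp.lsingle_apply]; rw [Finsupp.smul_single, smul_eq_mul]; rfl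

lemma incY_single (n : ℤ) (x : ℂ) : incY (sgW n x) = sgRU (0, n, 0) x := by
  rw [incY]; simp only [LinearMap.comp_apply, LinearEquiv.coe_coe, AddMonoidAlgebra.coeffLinearEquiv_apply, AddMonoidAlgebra.coeff_single]; erw [Finsupp.lsum_single]; erw [Finsupp.lsingle_apply]; rfl

lemma incYb_single (m : ℤ) (x : ℂ) : incYb (sgW m x) = sgRU (m, 0, 0) x := by
  rw [incYb]; simp only [LinearMap.comp_apply, LinearEquiv.coe_coe, AddMonoidAlgebra.coeffLinearEquiv_apply, AddMonoidAlgebra.coeff_single]; erw [Finsupp.lsum_single]; erw [Finsupp.lsingle_apply]; rfl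

lemma incT_single (q : ℤ × ℤ) (x : ℂ) : incT (sgLR q x) = sgRU (q.1, q.2, 0) x := by
  rw [incT]; simp only [LinearMap.comp_apply, LinearEquiv.coe_coe, AddMonoidAlgebra.coeffLinearEquiv_apply, AddMonoidAlgebra.coeff_single]; erw [Finsupp.lsum_single]; erw [Finsupp.lsingle_apply]; rfl

lemma jY_single (n : ℤ) (x : ℂ) : jY (sgW n x) = sgLR (0, n) x := by
  rw [jY]; simp only [LinearMap.comp_apply, LinearEquiv.coe_coe, AddMonoidAlgebra.coeffLinearEquiv_apply, AddMonoidAlgebra.coeff_single]; erw [Finsupp.lsum_single]; erw [Finsupp.lsingle_apply]; rfl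

lemma jYb_single (m : ℤ) (x : ℂ) : jYb (sgW m x) = sgLR (m, 0) x := by
  rw [jYb]; simp only [LinearMap.comp_apply, LinearEquiv.coe_coe, AddMonoidAlgebra.coeffLinearEquiv_apply, AddMonoidAlgebra.coeff_single]; erw [Finsupp.lsum_single]; erw [Finsupp.lsingle_apply]; rfl

lemma uVar_eq : uVar = sgRU (0, 0, 1) 1 := rfl

/-- helper: singles with same index add coefficients -/
lemma sgRU_add (a : ℤ × ℤ × ℕ) (x y : ℂ) : sgRU a x + sgRU a y = sgRU a (x + y) :=
  (AddMonoidAlgebra.single_add a x y).symm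

lemma sgW_add (a : ℤ) (x y : ℂ) : sgW a x + sgW a y = sgW a (x + y) :=
  (AddMonoidAlgebra.single_add a x y).symm

/-! #### multiplicativity -/

lemma incT_mul (a b : LR) : incT (a * b) = incT a * incT b := by
  induction a using AddMonoidAlgebra.induction_linear with
  | zero => simp
  | add p q hp hq =>
    simp only [map_add, mul_add, add_mul, hp, hq]
    try abel
  | single q x =>
    induction b using AddMonoidAlgebra.induction_linear with
    | zero => simp
    | add p' q' hp hq =>
      simp only [map_add, mul_add, add_mul, hp, hq]
      try abel
    | single r y =>
      show incT (sgLR q x * sgLR r y) = incT (sgLR q x) * incT (sgLR r y)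
      rw [LR_single_mul, incT_single, incT_single, incT_single, RU_single_mul]
      rfl

lemma jY_mul (a b : W) : jY (a * b) = jY a * jY b := by
  induction a using AddMonoidAlgebra.induction_linear with
  | zero => simp
  | add p q hp hq =>
    simp only [map_add, mul_add, add_mul, hp, hq]
    try abel
  | single q x =>
    induction b using AddMonoidAlgebra.induction_linear with
    | zero => simp
    | add p' q' hp hq =>
      simp only [map_add, mul_add, add_mul, hp, hq]
      try abel
    | single r y =>
      show jY (sgW q x * sgW r y) = jY (sgW q x) * jY (sgW r y)
      rw [W_single_mul, jY_single, jY_single, jY_single, LR_single_mul]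
      rfl

lemma jYb_mul (a b : W) : jYb (a * b) = jYb a * jYb b := by
  induction a using AddMonoidAlgebra.induction_linear with
  | zero => simp
  | add p q hp hq =>
    simp only [map_add, mul_add, add_mul, hp, hq]
    try abel
  | single q x =>
    induction b using AddMonoidAlgebra.induction_linear with
    | zero => simp
    | add p' q' hp hq =>
      simp only [map_add, mul_add, add_mul, hp, hq]
      try abel
    | single r y =>
      show jYb (sgW q x * sgW r y) = jYb (sgW q x) * jYb (sgW r y)
      rw [W_single_mul, jYb_single, jYb_single, jYb_single, LR_single_mul]
      rfl

/-! #### Leibniz rule for `ethW` -/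

lemma ethW_mul (a b : W) : ethW (a * b) = ethW a * b + a * ethW b := by
  induction a using AddMonoidAlgebra.induction_linear with
  | zero => simp
  | add p q hp hq =>
    rw [add_mul, map_add, hp, hq, map_add, add_mul, add_mul]; abel
  | single q x =>
    induction b using AddMonoidAlgebra.induction_linear with
    | zero => simp
    | add p' q' hp hq =>
      rw [mul_add, map_add, hp, hq, map_add, mul_add, mul_add]; abel
    | single r y =>
      show ethW (sgW q x * sgW r y) = ethW (sgW q x) * sgW r y + sgW q x * ethW (sgW r y)
      rw [W_single_mul, ethW_single, ethW_single, ethW_single, W_single_mul, W_single_mul]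
      rw [show q - 1 + r = q + r - 1 by ring, show q + (r - 1) = q + r - 1 by ring, sgW_add]
      congr 1
      push_cast
      ring

/-! #### commutation with inclusions -/

lemma incT_jY (y : W) : incT (jY y) = incY y := by
  induction y using AddMonoidAlgebra.induction_linear with
  | zero => simp
  | add p q hp hq =>
    simp only [map_add, mul_add, add_mul, hp, hq]
    try abel
  | single n x => rw [jY_single, incT_single, incY_single]

lemma incT_jYb (y : W) : incT (jYb y) = incYb y := by
  induction y using AddMonoidAlgebra.induction_linear with
  | zero => simp
  | add p q hp hq =>
    simp only [map_add, mul_add, add_mul, hp, hq]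
    try abel
  | single m x => rw [jYb_single, incT_single, incYb_single]

lemma ethR_jY (y : W) : ethR (jY y) = jY (ethW y) := by
  induction y using AddMonoidAlgebra.induction_linear with
  | zero => simp
  | add p q hp hq =>
    simp only [map_add, mul_add, add_mul, hp, hq]
    try abel
  | single n x => rw [jY_single, ethR_single, ethW_single, jY_single]

lemma ethBarR_jYb (y : W) : ethBarR (jYb y) = jYb (ethW y) := by
  induction y using AddMonoidAlgebra.induction_linear with
  | zero => simp
  | add p q hp hq =>
    simp only [map_add, mul_add, add_mul, hp, hq]
    try abel
  | single m x => rw [jYb_single, ethBarR_single, ethW_single, jYb_single]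

lemma ethR_jYb (y : W) : ethR (jYb y) = 0 := by
  induction y using AddMonoidAlgebra.induction_linear with
  | zero => simp
  | add p q hp hq =>
    simp only [map_add, mul_add, add_mul, hp, hq]
    try abel
  | single m x =>
    rw [jYb_single, ethR_single]
    simp

lemma ethBarR_jY (y : W) : ethBarR (jY y) = 0 := by
  induction y using AddMonoidAlgebra.induction_linear with
  | zero => simp
  | add p q hp hq =>
    simp only [map_add, mul_add, add_mul, hp, hq]
    try abel
  | single n x =>
    rw [jY_single, ethBarR_single]
    simp

/-! #### action of the `RU` derivations on `incT` and `uVar * incT` -/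

lemma eth_incT (x : LR) : eth (incT x) = incT (ethR x) := by
  induction x using AddMonoidAlgebra.induction_linear with
  | zero => simp
  | add p q hp hq =>
    simp only [map_add, mul_add, add_mul, hp, hq]
    try abel
  | single q c => rw [incT_single, eth_single, ethR_single, incT_single]

lemma ethBar_incT (x : LR) : ethBar (incT x) = incT (ethBarR x) := by
  induction x using AddMonoidAlgebra.induction_linear with
  | zero => simp
  | add p q hp hq =>
    simp only [map_add, mul_add, add_mul, hp, hq]
    try abel
  | single q c => rw [incT_single, ethBar_single, ethBarR_single, incT_single]

lemma du_incT (x : LR) : du (incT x) = 0 := by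
  induction x using AddMonoidAlgebra.induction_linear with
  | zero => simp
  | add p q hp hq =>
    simp only [map_add, mul_add, add_mul, hp, hq]
    try abel
  | single q c =>
    rw [incT_single, du_single]
    simp

lemma eth_u_incT (x : LR) : eth (uVar * incT x) = uVar * incT (ethR x) := by
  induction x using AddMonoidAlgebra.induction_linear with
  | zero => simp
  | add p q hp hq =>
    simp only [map_add, mul_add, add_mul, hp, hq]
    try abel
  | single q c =>
    rw [incT_single, uVar_eq, RU_single_mul, eth_single, ethR_single, incT_single,
      RU_single_mul, one_mul, one_mul]
    simp

lemma ethBar_u_incT (x : LR) : ethBar (uVar * incT x) = uVar * incT (ethBarR x) := by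
  induction x using AddMonoidAlgebra.induction_linear with
  | zero => simp
  | add p q hp hq =>
    simp only [map_add, mul_add, add_mul, hp, hq]
    try abel
  | single q c =>
    rw [incT_single, uVar_eq, RU_single_mul, ethBar_single, ethBarR_single, incT_single,
      RU_single_mul, one_mul, one_mul]
    simp

lemma du_u_incT (x : LR) : du (uVar * incT x) = incT x := by
  induction x using AddMonoidAlgebra.induction_linear with
  | zero => simp
  | add p q hp hq =>
    simp only [map_add, mul_add, add_mul, hp, hq]
    try abel
  | single q c =>
    rw [incT_single, uVar_eq, RU_single_mul, du_single, one_mul]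
    norm_num

lemma smul_RU (c : ℂ) (x : RU) : c • x = sgRU 0 c * x := by
  induction x using AddMonoidAlgebra.induction_linear with
  | zero => simp
  | add p q hp hq => simp only [smul_add, mul_add, hp, hq]
  | single a y =>
    rw [RU_single_mul, zero_add]
    erw [AddMonoidAlgebra.smul_single']


/-- For symmetry parameters `s₁, s₂` with associated functions
`f₁ = f_{s₁}`, `f₂ = f_{s₂} ∈ R[u]`, the combination
`f̂ = 𝒴₁ðf₂ + 𝒴̄₁ð̄f₂ + f₁∂_u f₂ − 𝒴₂ðf₁ − 𝒴̄₂ð̄f₁ − f₂∂_u f₁`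
equals `f_{[s₁,s₂]}`, i.e. `f̂ = T̂ + (u/2)(ð𝒴̂ + ð̄𝒴̄̂)` for `(𝒴̂,𝒴̄̂,T̂) = [s₁,s₂]`:
the `u`-components `ξ^u = f` of the asymptotic Killing vectors close under the modified
Lie bracket. -/
theorem fHat_eq_f_of_bracket (s₁ s₂ : SymParam) :
    incY s₁.cY * eth (fOf s₂) + incYb s₁.cYb * ethBar (fOf s₂) + fOf s₁ * du (fOf s₂)
      - incY s₂.cY * eth (fOf s₁) - incYb s₂.cYb * ethBar (fOf s₁) - fOf s₂ * du (fOf s₁)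
      = fOf (sBracket s₁ s₂) := by
  simp only [fOf, psiR, sBracket, map_add, map_sub, map_smul, mul_add, add_mul,
    eth_incT, ethBar_incT, du_incT, eth_u_incT, ethBar_u_incT, du_u_incT,
    ethR_jY, ethR_jYb, ethBarR_jY, ethBarR_jYb, ethW_mul, jY_mul, jYb_mul,
    incT_mul, map_zero, add_zero, zero_add, mul_zero, zero_mul, smul_add, smul_sub]
  simp only [incT_jY, incT_jYb, smul_RU]
  ring
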